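/- arXiv:1504.08117 — 3 statements merged into one kernel-verified Lean document; each statement's English description precedes it below -/
import Mathlib

section
/- Let n ≥ 1 and let Q be an n×n real matrix with all entries nonnegative. Suppose there exists u ∈ ℝ^n with u ≥ 0 entrywise, u ≠ 0, and uᵀQ = ρ(Q)·uᵀ (a nonnegative left eigenvector for the spectral radius). Let q₀ ∈ ℝ^n have all entries strictly positive and let w ∈ ℝ^n have all entries strictly positive. Then lim_{t→∞} (q₀ᵀQᵗw / q₀ᵀw)^(1/t) = ρ(Q). (Theorem 1, part 3: under random initialization, the average convergence rate R(t) converges to 1 − ρ(Q).) -/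
open Matrix Filter
open scoped NNReal ENNReal

/-- The spectral radius of a real matrix: the supremum of the moduli of its
complex eigenvalues. -/
noncomputable def specRad (n : ℕ) (Q : Matrix (Fin n) (Fin n) ℝ) : ℝ :=
  sSup {r : ℝ | ∃ μ ∈ spectrum ℂ (Q.map Complex.ofReal), r = ‖μ‖}

section AuxGelfand

attribute [local instance] Matrix.linftyOpNormedRing Matrix.linftyOpNormedAlgebra

variable {n : ℕ}

private lemma entry_le_norm' (A : Matrix (Fin n) (Fin n) ℂ) (i j : Fin n) : ‖A i j‖ ≤ ‖A‖ := by
  have h1 : (‖A i j‖₊ : ℝ≥0) ≤ ∑ k, ‖A i k‖₊ :=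
    Finset.single_le_sum (f := fun k => ‖A i k‖₊) (fun _ _ => zero_le) (Finset.mem_univ j)
  have h2 : (∑ k, ‖A i k‖₊) ≤ ‖A‖₊ := by
    rw [Matrix.linfty_opNNNorm_def]
    exact Finset.le_sup (f := fun i => ∑ j, ‖A i j‖₊) (Finset.mem_univ i)
  exact_mod_cast h1.trans h2

private lemma specRad_aux (hn : 1 ≤ n) (Q : Matrix (Fin n) (Fin n) ℝ) :
    0 ≤ specRad n Q ∧
      Tendsto (fun t : ℕ => ‖(Q.map Complex.ofReal) ^ t‖ ^ ((1 : ℝ) / t)) atTop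
        (nhds (specRad n Q)) := by
  haveI : Nonempty (Fin n) := ⟨⟨0, hn⟩⟩
  haveI : CompleteSpace (Matrix (Fin n) (Fin n) ℂ) := FiniteDimensional.complete ℂ _
  set A := Q.map Complex.ofReal with hA
  obtain ⟨z, hz, hz'⟩ := spectrum.exists_nnnorm_eq_spectralRadius A
  have hub : ∀ r ∈ {r : ℝ | ∃ μ ∈ spectrum ℂ A, r = ‖μ‖}, r ≤ ‖z‖ := by
    rintro r ⟨μ, hμ, rfl⟩
    have h1 : (‖μ‖₊ : ℝ≥0∞) ≤ spectralRadius ℂ A :=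
      le_iSup₂ (f := fun k (_ : k ∈ spectrum ℂ A) => (‖k‖₊ : ℝ≥0∞)) μ hμ
    rw [← hz'] at h1
    have h2 : ‖μ‖₊ ≤ ‖z‖₊ := by exact_mod_cast h1
    calc ‖μ‖ = ‖μ‖ := rfl
      _ ≤ ‖z‖ := h2
  have hmem : ‖z‖ ∈ {r : ℝ | ∃ μ ∈ spectrum ℂ A, r = ‖μ‖} :=
    ⟨z, hz, rfl⟩
  have hspec : specRad n Q = ‖z‖ :=
    le_antisymm (csSup_le ⟨‖z‖, hmem⟩ hub) (le_csSup ⟨‖z‖, hub⟩ hmem)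
  have htop : spectralRadius ℂ A ≠ ⊤ := by rw [← hz']; exact ENNReal.coe_ne_top
  have htr : (spectralRadius ℂ A).toReal = specRad n Q := by
    rw [hspec, ← hz', ENNReal.coe_toReal, coe_nnnorm]
  constructor
  · rw [hspec]; exact norm_nonneg z
  · have G := spectrum.pow_norm_pow_one_div_tendsto_nhds_spectralRadius A
    have G2 := (ENNReal.tendsto_toReal htop).comp G
    rw [htr] at G2
    refine G2.congr fun t => ?_
    simp only [Function.comp_apply, ENNReal.toReal_ofReal (Real.rpow_nonneg (norm_nonneg _) _)]

/-- Theorem 1, part 3: under random initialization (`q₀ > 0` entrywise), the average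
convergence rate `R(t)` converges to `1 - ρ(Q)`, i.e.,
`lim_{t→∞} (q₀ᵀQᵗw / q₀ᵀw)^(1/t) = ρ(Q)`. -/
theorem average_rate_tendsto_specRad (n : ℕ) (hn : 1 ≤ n)
    (Q : Matrix (Fin n) (Fin n) ℝ) (hQ : ∀ i j, 0 ≤ Q i j)
    (u : Fin n → ℝ) (hu0 : ∀ i, 0 ≤ u i) (hune : u ≠ 0)
    (hu : u ᵥ* Q = specRad n Q • u)
    (q₀ : Fin n → ℝ) (hq₀ : ∀ i, 0 < q₀ i)
    (w : Fin n → ℝ) (hw : ∀ i, 0 < w i) :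
    Filter.Tendsto (fun t : ℕ => ((q₀ ⬝ᵥ ((Q ^ t) *ᵥ w)) / (q₀ ⬝ᵥ w)) ^ ((1 : ℝ) / t))
      Filter.atTop (nhds (specRad n Q)) := by
  haveI : Nonempty (Fin n) := ⟨⟨0, hn⟩⟩
  obtain ⟨hρ0, hGel⟩ := specRad_aux hn Q
  set ρ := specRad n Q with hρdef
  set A := Q.map Complex.ofReal with hAdef
  -- basic positivity
  have hs : 0 < q₀ ⬝ᵥ w :=
    Finset.sum_pos (fun i _ => mul_pos (hq₀ i) (hw i)) Finset.univ_nonempty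
  have hQt : ∀ t, ∀ i j, 0 ≤ (Q ^ t) i j := by
    intro t
    induction t with
    | zero => intro i j; by_cases h : i = j <;> simp [Matrix.one_apply, h]
    | succ t ih =>
      intro i j
      rw [pow_succ, Matrix.mul_apply]
      exact Finset.sum_nonneg fun k _ => mul_nonneg (ih i k) (hQ k j)
  have hv : ∀ t j, 0 ≤ ((Q ^ t) *ᵥ w) j := by
    intro t j
    simp only [Matrix.mulVec, dotProduct]
    exact Finset.sum_nonneg fun k _ => mul_nonneg (hQt t j k) (hw k).le
  have ha : ∀ t, 0 ≤ q₀ ⬝ᵥ ((Q ^ t) *ᵥ w) := fun t =>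
    Finset.sum_nonneg fun i _ => mul_nonneg (hq₀ i).le (hv t i)
  -- iterated eigenvector relation
  have hut : ∀ t, u ᵥ* (Q ^ t) = (ρ ^ t) • u := by
    intro t
    induction t with
    | zero => simp
    | succ t ih =>
      rw [pow_succ, ← Matrix.vecMul_vecMul, ih, Matrix.smul_vecMul, hu, smul_smul,
        pow_succ]
  -- positive entry of u
  obtain ⟨i₀, hi₀⟩ : ∃ i, 0 < u i := by
    by_contra h
    push_neg at h
    exact hune (funext fun i => le_antisymm (h i) (hu0 i))
  have huw : 0 < u ⬝ᵥ w :=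
    Finset.sum_pos' (fun i _ => mul_nonneg (hu0 i) (hw i).le)
      ⟨i₀, Finset.mem_univ i₀, mul_pos hi₀ (hw i₀)⟩
  -- the constant α with α • u ≤ q₀
  set m₂ := Finset.univ.sup' Finset.univ_nonempty u with hm₂def
  have hm₂ : 0 < m₂ := lt_of_lt_of_le hi₀ (Finset.le_sup' u (Finset.mem_univ i₀))
  set m₁ := Finset.univ.inf' Finset.univ_nonempty q₀ with hm₁def
  have hm₁ : 0 < m₁ := by
    rw [hm₁def, Finset.lt_inf'_iff]
    exact fun i _ => hq₀ i
  set α := m₁ / m₂ with hαdef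
  have hα : 0 < α := div_pos hm₁ hm₂
  have hαu : ∀ i, α * u i ≤ q₀ i := by
    intro i
    have h1 : α * u i ≤ α * m₂ :=
      mul_le_mul_of_nonneg_left (Finset.le_sup' u (Finset.mem_univ i)) hα.le
    have h2 : α * m₂ = m₁ := by
      rw [hαdef]; field_simp
    have h3 : m₁ ≤ q₀ i := Finset.inf'_le q₀ (Finset.mem_univ i)
    linarith
  -- lower bound
  have hlow : ∀ t, α * ((u ⬝ᵥ w) * ρ ^ t) ≤ q₀ ⬝ᵥ ((Q ^ t) *ᵥ w) := by
    intro t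
    have key : u ⬝ᵥ ((Q ^ t) *ᵥ w) = ρ ^ t * (u ⬝ᵥ w) := by
      rw [Matrix.dotProduct_mulVec, hut t, smul_dotProduct, smul_eq_mul]
    have h1 : α * (u ⬝ᵥ ((Q ^ t) *ᵥ w)) ≤ q₀ ⬝ᵥ ((Q ^ t) *ᵥ w) := by
      rw [dotProduct, dotProduct, Finset.mul_sum]
      refine Finset.sum_le_sum fun i _ => ?_
      rw [← mul_assoc]
      exact mul_le_mul_of_nonneg_right (hαu i) (hv t i)
    calc α * ((u ⬝ᵥ w) * ρ ^ t) = α * (u ⬝ᵥ ((Q ^ t) *ᵥ w)) := by rw [key]; ring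
      _ ≤ _ := h1
  -- entrywise upper bound via the norm
  have hmap : ∀ t : ℕ, (Q ^ t).map Complex.ofReal = A ^ t := by
    intro t
    have h := map_pow (Complex.ofRealHom.mapMatrix) Q t
    exact h
  have hentry : ∀ t (i j : Fin n), (Q ^ t) i j ≤ ‖A ^ t‖ := by
    intro t i j
    have h1 : ‖(A ^ t) i j‖ ≤ ‖A ^ t‖ := entry_le_norm' _ i j
    have h2 : |(Q ^ t) i j| = ‖(A ^ t) i j‖ := by
      rw [← hmap t]; simp [Matrix.map_apply]
    calc (Q ^ t) i j ≤ |(Q ^ t) i j| := le_abs_self _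
      _ = ‖(A ^ t) i j‖ := h2
      _ ≤ ‖A ^ t‖ := h1
  have hupper : ∀ t, q₀ ⬝ᵥ ((Q ^ t) *ᵥ w) ≤ ((∑ i, q₀ i) * (∑ j, w j)) * ‖A ^ t‖ := by
    intro t
    calc q₀ ⬝ᵥ ((Q ^ t) *ᵥ w) = ∑ i, ∑ j, q₀ i * ((Q ^ t) i j * w j) := by
          simp [dotProduct, Matrix.mulVec, Finset.mul_sum]
      _ ≤ ∑ i, ∑ j, q₀ i * (‖A ^ t‖ * w j) := by
          refine Finset.sum_le_sum fun i _ => Finset.sum_le_sum fun j _ => ?_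
          exact mul_le_mul_of_nonneg_left
            (mul_le_mul_of_nonneg_right (hentry t i j) (hw j).le) (hq₀ i).le
      _ = ∑ i, q₀ i * (‖A ^ t‖ * ∑ j, w j) := by
          refine Finset.sum_congr rfl fun i _ => ?_
          rw [Finset.mul_sum, Finset.mul_sum]
      _ = (∑ i, q₀ i) * (‖A ^ t‖ * ∑ j, w j) := by rw [← Finset.sum_mul]
      _ = ((∑ i, q₀ i) * (∑ j, w j)) * ‖A ^ t‖ := by ring
  -- constants
  set s := q₀ ⬝ᵥ w with hsdef
  set c₁ := α * (u ⬝ᵥ w) / s with hc₁def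
  have hc₁ : 0 < c₁ := div_pos (mul_pos hα huw) hs
  have hq₀sum : 0 < ∑ i, q₀ i := Finset.sum_pos (fun i _ => hq₀ i) Finset.univ_nonempty
  have hwsum : 0 < ∑ j, w j := Finset.sum_pos (fun j _ => hw j) Finset.univ_nonempty
  set c₂ := ((∑ i, q₀ i) * (∑ j, w j)) / s with hc₂def
  have hc₂ : 0 < c₂ := div_pos (mul_pos hq₀sum hwsum) hs
  have hfl : ∀ t : ℕ, c₁ * ρ ^ t ≤ (q₀ ⬝ᵥ ((Q ^ t) *ᵥ w)) / s := by
    intro t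
    calc c₁ * ρ ^ t = (α * ((u ⬝ᵥ w) * ρ ^ t)) / s := by rw [hc₁def]; ring
      _ ≤ _ := (div_le_div_iff_of_pos_right hs).mpr (hlow t)
  have hfu : ∀ t : ℕ, (q₀ ⬝ᵥ ((Q ^ t) *ᵥ w)) / s ≤ c₂ * ‖A ^ t‖ := by
    intro t
    calc (q₀ ⬝ᵥ ((Q ^ t) *ᵥ w)) / s ≤ (((∑ i, q₀ i) * (∑ j, w j)) * ‖A ^ t‖) / s :=
          (div_le_div_iff_of_pos_right hs).mpr (hupper t)
      _ = c₂ * ‖A ^ t‖ := by rw [hc₂def]; ring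
  -- the two sandwiching limits
  have hone : ∀ c : ℝ, 0 < c → Tendsto (fun t : ℕ => c ^ ((1 : ℝ) / t)) atTop (nhds 1) := by
    intro c hc
    have hcont : ContinuousAt (fun y : ℝ => c ^ y) 0 := Real.continuousAt_const_rpow hc.ne'
    have h := hcont.tendsto.comp tendsto_one_div_atTop_nhds_zero_nat
    simpa [Real.rpow_zero, Function.comp_def] using h
  have hU : Tendsto (fun t : ℕ => (c₂ * ‖A ^ t‖) ^ ((1 : ℝ) / t)) atTop (nhds ρ) := by
    have h := (hone c₂ hc₂).mul hGel
    rw [one_mul] at h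
    exact h.congr fun t => (Real.mul_rpow hc₂.le (norm_nonneg _)).symm
  have hL : Tendsto (fun t : ℕ => (c₁ * ρ ^ t) ^ ((1 : ℝ) / t)) atTop (nhds ρ) := by
    rcases eq_or_lt_of_le hρ0 with h0 | hpos
    · rw [← h0]
      refine Tendsto.congr' ?_ (tendsto_const_nhds (x := (0 : ℝ)))
      filter_upwards [eventually_ge_atTop 1] with t ht
      have htne : (1 : ℝ) / t ≠ 0 :=
        one_div_ne_zero (Nat.cast_ne_zero.mpr (by omega))
      rw [zero_pow (by omega : t ≠ 0), mul_zero, Real.zero_rpow htne]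
    · have h := (hone c₁ hc₁).mul_const ρ
      rw [one_mul] at h
      refine h.congr' ?_
      filter_upwards [eventually_ge_atTop 1] with t ht
      have htne : (t : ℝ) ≠ 0 := Nat.cast_ne_zero.mpr (by omega)
      rw [Real.mul_rpow hc₁.le (pow_nonneg hρ0 t), ← Real.rpow_natCast ρ t,
        ← Real.rpow_mul hρ0, mul_one_div_cancel htne, Real.rpow_one]
  refine tendsto_of_tendsto_of_tendsto_of_le_of_le' hL hU ?_ ?_
  · filter_upwards [eventually_ge_atTop 1] with t ht
    exact Real.rpow_le_rpow (mul_nonneg hc₁.le (pow_nonneg hρ0 t)) (hfl t) (by positivity)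
  · filter_upwards [eventually_ge_atTop 1] with t ht
    exact Real.rpow_le_rpow (div_nonneg (ha t) hs.le) (hfu t) (by positivity)

end AuxGelfand
end

section
/- Let n ≥ 1 and let Q be an n×n real matrix with all entries nonnegative and spectral radius ρ(Q) < 1. Suppose there exists v ∈ ℝ^n with v ≥ 0 entrywise, v ≠ 0, and Q·v = ρ(Q)·v (a nonnegative right eigenvector for the spectral radius). Then the matrix I − Q is invertible, and the vector m := (I − Q)⁻¹·𝟙 (where 𝟙 is the all-ones vector) satisfies max_{1 ≤ i ≤ n} m_i ≥ 1/(1 − ρ(Q)). (Theorem 2: the reciprocal of the asymptotic average convergence rate R_∞ = 1 − ρ(Q) is a lower bound on the maximal expected hitting time.) -/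
open Matrix Filter Topology
open scoped ENNReal NNReal

section Aux
attribute [local instance] Matrix.linftyOpNormedRing Matrix.linftyOpNormedAlgebra
  Matrix.linftyOpNormedAddCommGroup

noncomputable local instance (n : ℕ) : CompleteSpace (Matrix (Fin n) (Fin n) ℂ) :=
  inferInstanceAs (CompleteSpace (Fin n → Fin n → ℂ))

lemma specRad_bddAbove (n : ℕ) (hn : 1 ≤ n) (Q : Matrix (Fin n) (Fin n) ℝ) :
    BddAbove {r : ℝ | ∃ μ ∈ spectrum ℂ (Q.map Complex.ofReal), r = ‖μ‖} := by
  haveI : Nonempty (Fin n) := Fin.pos_iff_nonempty.mp hn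
  refine ⟨‖Q.map Complex.ofReal‖, ?_⟩
  rintro r ⟨μ, hμ, rfl⟩
  exact spectrum.norm_le_norm_of_mem hμ

lemma specRad_set_nonempty (n : ℕ) (hn : 1 ≤ n) (Q : Matrix (Fin n) (Fin n) ℝ) :
    {r : ℝ | ∃ μ ∈ spectrum ℂ (Q.map Complex.ofReal), r = ‖μ‖}.Nonempty := by
  haveI : Nonempty (Fin n) := Fin.pos_iff_nonempty.mp hn
  obtain ⟨μ, hμ⟩ := spectrum.nonempty (Q.map Complex.ofReal)
  exact ⟨‖μ‖, μ, hμ, rfl⟩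

lemma entry_pow_tendsto_zero (n : ℕ) (hn : 1 ≤ n) (Q : Matrix (Fin n) (Fin n) ℝ)
    (hρ : specRad n Q < 1) (i j : Fin n) :
    Tendsto (fun N => (Q ^ N) i j) atTop (𝓝 (0:ℝ)) := by
  haveI : Nonempty (Fin n) := Fin.pos_iff_nonempty.mp hn
  set A := Q.map Complex.ofReal with hA
  have hbdd := specRad_bddAbove n hn Q
  -- spectral radius bound
  have hsub : spectralRadius ℂ A ≤ ENNReal.ofReal (specRad n Q) := by
    rw [spectralRadius]
    refine iSup₂_le fun μ hμ => ?_
    have h1 : ‖μ‖ ≤ specRad n Q := le_csSup hbdd ⟨μ, hμ, rfl⟩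
    calc (‖μ‖₊ : ℝ≥0∞) = ENNReal.ofReal ‖μ‖ := by rw [ofReal_norm_eq_enorm]; rfl
      _ ≤ ENNReal.ofReal (specRad n Q) := ENNReal.ofReal_le_ofReal h1
  have hsr1 : spectralRadius ℂ A < 1 :=
    lt_of_le_of_lt hsub (ENNReal.ofReal_lt_one.mpr hρ)
  obtain ⟨r, hr1, hr2⟩ := ENNReal.lt_iff_exists_nnreal_btwn.mp hsr1
  have hrlt1 : (r : ℝ) < 1 := by exact_mod_cast ENNReal.coe_lt_one_iff.mp hr2
  have gel := spectrum.pow_nnnorm_pow_one_div_tendsto_nhds_spectralRadius A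
  have hev : ∀ᶠ N : ℕ in atTop, (‖A ^ N‖₊ : ℝ≥0∞) ^ (1 / (N:ℝ)) < (r : ℝ≥0∞) :=
    gel.eventually_lt_const hr1
  have hev2 : ∀ᶠ N : ℕ in atTop, ‖A ^ N‖ ≤ (r : ℝ) ^ N := by
    filter_upwards [hev, eventually_ge_atTop 1] with N hN hN1
    have hN0 : (N : ℝ) ≠ 0 := Nat.cast_ne_zero.mpr (by omega)
    have hx : ((‖A ^ N‖₊ : ℝ≥0∞)) = ((‖A ^ N‖₊ : ℝ≥0∞) ^ (1 / (N:ℝ))) ^ (N:ℝ) := by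
      rw [← ENNReal.rpow_mul, one_div_mul_cancel hN0, ENNReal.rpow_one]
    have h3 : (‖A ^ N‖₊ : ℝ≥0∞) ≤ ((r ^ N : ℝ≥0) : ℝ≥0∞) := by
      rw [ENNReal.coe_pow, ← ENNReal.rpow_natCast ((r : ℝ≥0∞)) N]
      exact hx ▸ ENNReal.rpow_le_rpow hN.le (Nat.cast_nonneg N)
    rw [ENNReal.coe_le_coe] at h3
    calc ‖A ^ N‖ = ((‖A ^ N‖₊ : ℝ≥0) : ℝ) := rfl
      _ ≤ ((r ^ N : ℝ≥0) : ℝ) := by exact_mod_cast h3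
      _ = (r : ℝ) ^ N := by push_cast; ring
  have hA0 : Tendsto (fun N => ‖A ^ N‖) atTop (𝓝 (0:ℝ)) :=
    squeeze_zero' (Eventually.of_forall fun N => norm_nonneg _) hev2
      (tendsto_pow_atTop_nhds_zero_of_lt_one r.coe_nonneg hrlt1)
  have hmap : ∀ N, A ^ N = (Q ^ N).map Complex.ofReal := by
    intro N
    have h := map_pow (Complex.ofRealHom.mapMatrix) Q N
    simp only [RingHom.mapMatrix_apply] at h; exact h.symm
  refine squeeze_zero_norm' ?_ hA0
  filter_upwards with N
  have hentry : ‖(A ^ N) i j‖ ≤ ‖A ^ N‖ := by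
    have h : ‖(A ^ N) i j‖₊ ≤ ‖A ^ N‖₊ := by
      rw [Matrix.linfty_opNNNorm_def]
      calc ‖(A ^ N) i j‖₊ ≤ ∑ k, ‖(A ^ N) i k‖₊ :=
            Finset.single_le_sum (f := fun k => ‖(A ^ N) i k‖₊) (fun k _ => zero_le)
              (Finset.mem_univ j)
        _ ≤ _ := Finset.le_sup (f := fun i => ∑ j, ‖(A ^ N) i j‖₊) (Finset.mem_univ i)
    exact h
  calc ‖(Q ^ N) i j‖ = ‖(A ^ N) i j‖ := by
        rw [hmap N]; simp [Matrix.map_apply, Complex.norm_real]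
    _ ≤ ‖A ^ N‖ := hentry
end Aux

/-- Theorem 2: for a convergent EA (`ρ(Q) < 1`, `Q ≥ 0` entrywise, with a nonnegative
nonzero eigenvector for `ρ(Q)`), the matrix `I - Q` is invertible and the maximal entry
of the expected hitting time vector `m = (I - Q)⁻¹·𝟙` is at least `1/(1 - ρ(Q))`. -/
theorem hitting_time_lower_bound (n : ℕ) (hn : 1 ≤ n)
    (Q : Matrix (Fin n) (Fin n) ℝ) (hQ : ∀ i j, 0 ≤ Q i j)
    (hρ : specRad n Q < 1)
    (v : Fin n → ℝ) (hv0 : ∀ i, 0 ≤ v i) (hvne : v ≠ 0)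
    (hv : Q *ᵥ v = specRad n Q • v) :
    IsUnit (1 - Q) ∧
    ∃ i : Fin n, 1 / (1 - specRad n Q) ≤ ((1 - Q)⁻¹ *ᵥ (fun _ => (1 : ℝ))) i := by
  have hbdd := specRad_bddAbove n hn Q
  have hSne := specRad_set_nonempty n hn Q
  set ρ := specRad n Q with hρdef
  have hρ0 : 0 ≤ ρ := by
    obtain ⟨r, μ, hμ, rfl⟩ := hSne
    exact le_trans (norm_nonneg μ) (le_csSup hbdd ⟨μ, hμ, rfl⟩)
  -- invertibility of 1 - Q
  have hdet : IsUnit (1 - Q).det := by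
    by_contra hd
    have hd0 : (1 - Q).det = 0 := by simpa [isUnit_iff_ne_zero] using hd
    have hdc : ((1 : Matrix (Fin n) (Fin n) ℂ) - Q.map Complex.ofReal).det = 0 := by
      have h := RingHom.map_det Complex.ofRealHom (1 - Q)
      rw [hd0, map_zero] at h
      have heq : Complex.ofRealHom.mapMatrix (1 - Q)
          = (1 : Matrix (Fin n) (Fin n) ℂ) - Q.map Complex.ofReal := by
        ext i j
        by_cases hij : i = j <;>
          simp [RingHom.mapMatrix_apply, Matrix.map_apply, Matrix.one_apply, hij,
            Matrix.sub_apply]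
      rw [heq] at h
      exact h.symm
    have hnu : ¬ IsUnit ((1 : Matrix (Fin n) (Fin n) ℂ) - Q.map Complex.ofReal) := by
      rw [Matrix.isUnit_iff_isUnit_det, hdc]
      simp
    have h1 : (1 : ℂ) ∈ spectrum ℂ (Q.map Complex.ofReal) := by
      rw [spectrum.mem_iff]
      simpa using hnu
    have : (1 : ℝ) ≤ ρ := le_csSup hbdd ⟨1, h1, by simp⟩
    linarith
  have hunit : IsUnit (1 - Q) := (Matrix.isUnit_iff_isUnit_det _).mpr hdet
  refine ⟨hunit, ?_⟩
  set one : Fin n → ℝ := fun _ => (1 : ℝ) with hone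
  set m : Fin n → ℝ := (1 - Q)⁻¹ *ᵥ one with hm
  have hminv : (1 - Q) *ᵥ m = one := by
    rw [hm, Matrix.mulVec_mulVec, Matrix.mul_nonsing_inv _ hdet, Matrix.one_mulVec]
  have hrec : m = one + Q *ᵥ m := by
    rw [Matrix.sub_mulVec, Matrix.one_mulVec] at hminv
    exact eq_add_of_sub_eq hminv
  -- nonnegativity of powers
  have hQpow : ∀ (N : ℕ) (i j : Fin n), 0 ≤ (Q ^ N) i j := by
    intro N
    induction N with
    | zero => intro i j; by_cases hij : i = j <;> simp [Matrix.one_apply, hij]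
    | succ N ih =>
      intro i j
      rw [pow_succ, Matrix.mul_apply]
      exact Finset.sum_nonneg fun k _ => mul_nonneg (ih i k) (hQ k j)
  -- partial-sum decomposition
  have hpart : ∀ N : ℕ, m = (∑ k ∈ Finset.range N, (Q ^ k) *ᵥ one) + (Q ^ N) *ᵥ m := by
    intro N
    induction N with
    | zero => simp [Matrix.one_mulVec]
    | succ N ih =>
      rw [Finset.sum_range_succ]
      calc m = (∑ k ∈ Finset.range N, (Q ^ k) *ᵥ one) + (Q ^ N) *ᵥ m := ih
        _ = (∑ k ∈ Finset.range N, (Q ^ k) *ᵥ one) + (Q ^ N) *ᵥ (one + Q *ᵥ m) := by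
            rw [← hrec]
        _ = (∑ k ∈ Finset.range N, (Q ^ k) *ᵥ one) + ((Q ^ N) *ᵥ one
              + (Q ^ (N + 1)) *ᵥ m) := by
            rw [Matrix.mulVec_add, Matrix.mulVec_mulVec, ← pow_succ]
        _ = _ := by abel
  -- eigenvector powers
  have hQv : ∀ N : ℕ, (Q ^ N) *ᵥ v = ρ ^ N • v := by
    intro N
    induction N with
    | zero => simp [Matrix.one_mulVec]
    | succ N ih =>
      rw [pow_succ', ← Matrix.mulVec_mulVec, ih, Matrix.mulVec_smul, hv, smul_smul,
        ← pow_succ]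
  -- the maximising index
  obtain ⟨j0, hj0⟩ : ∃ j, v j ≠ 0 := Function.ne_iff.mp hvne
  obtain ⟨i, -, hi⟩ := Finset.exists_max_image Finset.univ v ⟨j0, Finset.mem_univ j0⟩
  have hc : 0 < v i := lt_of_lt_of_le ((hv0 j0).lt_of_ne (Ne.symm hj0))
    (hi j0 (Finset.mem_univ j0))
  refine ⟨i, ?_⟩
  -- entrywise bound: ρ^k ≤ (Q^k *ᵥ 1) i
  have hkey : ∀ k : ℕ, ρ ^ k ≤ ((Q ^ k) *ᵥ one) i := by
    intro k
    have h1 : ((Q ^ k) *ᵥ v) i ≤ ((Q ^ k) *ᵥ one) i * v i := by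
      rw [Matrix.mulVec, Matrix.mulVec]
      simp only [dotProduct, Finset.sum_mul]
      refine Finset.sum_le_sum fun j _ => ?_
      have := mul_le_mul_of_nonneg_left (hi j (Finset.mem_univ j)) (hQpow k i j)
      simpa [hone, mul_comm] using this
    rw [hQv k] at h1
    simp only [Pi.smul_apply, smul_eq_mul] at h1
    exact le_of_mul_le_mul_right h1 hc
  -- for each N : geometric partial sum ≤ m i - (Q^N *ᵥ m) i
  have hineq : ∀ N : ℕ, ∑ k ∈ Finset.range N, ρ ^ k ≤ m i - ((Q ^ N) *ᵥ m) i := by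
    intro N
    have h := congrFun (hpart N) i
    simp only [Pi.add_apply, Finset.sum_apply] at h
    have h2 : ∑ k ∈ Finset.range N, ρ ^ k ≤ ∑ k ∈ Finset.range N, ((Q ^ k) *ᵥ one) i :=
      Finset.sum_le_sum fun k _ => hkey k
    linarith [h2, h.ge, h.le]
  -- limits
  have htail : Tendsto (fun N => ((Q ^ N) *ᵥ m) i) atTop (𝓝 0) := by
    have : ∀ N, ((Q ^ N) *ᵥ m) i = ∑ j, (Q ^ N) i j * m j := by
      intro N; rfl
    simp only [this]
    have h0 : (0 : ℝ) = ∑ j : Fin n, 0 * m j := by simp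
    rw [h0]
    exact tendsto_finset_sum _ fun j _ =>
      (entry_pow_tendsto_zero n hn Q hρ i j).mul_const (m j)
  have hgeo : Tendsto (fun N => ∑ k ∈ Finset.range N, ρ ^ k) atTop (𝓝 (1 - ρ)⁻¹) :=
    (hasSum_geometric_of_lt_one hρ0 hρ).tendsto_sum_nat
  have hlim : Tendsto (fun N => m i - ((Q ^ N) *ᵥ m) i) atTop (𝓝 (m i)) := by
    simpa using tendsto_const_nhds.sub htail
  have := le_of_tendsto_of_tendsto' hgeo hlim hineq
  rw [one_div]
  exact this
end

section
/- Let n ≥ 1, let Q be an n×n real matrix with all entries strictly positive, let q₀ ∈ ℝ^n have all entries strictly positive, let g ∈ ℝ^n have all entries strictly positive, and let δ ≥ 1 be an integer. Then lim_{t→∞} (q₀ᵀQ^{t+δ}g)/(q₀ᵀQᵗg) = ρ(Q)^δ; consequently the alternative average convergence rate R‡(t) = 1 − ((q₀ᵀQ^{t+δ}g)/(q₀ᵀQᵗg))^{1/δ} converges to 1 − ρ(Q) as t → ∞. (Theorem 3, part 2: under random initialization and a positive transition submatrix, the alternative rate converges to the asymptotic average convergence rate.) -/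
set_option maxHeartbeats 1000000
open Matrix Filter Finset Topology

section
variable {n : ℕ} (hn : 1 ≤ n) (Q : Matrix (Fin n) (Fin n) ℝ) (hQ : ∀ i j, 0 < Q i j)
  (g : Fin n → ℝ) (hg : ∀ i, 0 < g i) (q₀ : Fin n → ℝ) (hq₀ : ∀ i, 0 < q₀ i)

include hn hQ hg hq₀ in
lemma perron_core :
    0 < specRad n Q ∧
    Filter.Tendsto (fun t : ℕ => (q₀ ⬝ᵥ ((Q ^ (t + 1)) *ᵥ g)) / (q₀ ⬝ᵥ ((Q ^ t) *ᵥ g)))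
      Filter.atTop (nhds (specRad n Q)) := by
  have hne : (Finset.univ : Finset (Fin n)).Nonempty := ⟨⟨0, hn⟩, Finset.mem_univ _⟩
  set x : ℕ → Fin n → ℝ := fun t => (Q ^ t) *ᵥ g with hxdef
  have hxsucc : ∀ t, x (t+1) = Q *ᵥ x t := by
    intro t
    simp only [hxdef, Matrix.mulVec_mulVec, ← pow_succ']
  have hxapp : ∀ t i, x (t+1) i = ∑ j, Q i j * x t j := by
    intro t i; rw [hxsucc, Matrix.mulVec, dotProduct]
  have hxpos : ∀ t i, 0 < x t i := by
    intro t
    induction t with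
    | zero => intro i; simpa [hxdef] using hg i
    | succ t ih =>
      intro i
      rw [hxapp]
      exact Finset.sum_pos (fun j _ => mul_pos (hQ i j) (ih j)) hne
  set r : ℕ → ℝ := fun t => Finset.univ.inf' hne (fun i => x (t+1) i / x t i) with hrdef
  set R : ℕ → ℝ := fun t => Finset.univ.sup' hne (fun i => x (t+1) i / x t i) with hRdef
  have hrx : ∀ t i, r t * x t i ≤ x (t+1) i := by
    intro t i
    have := Finset.inf'_le (fun i => x (t+1) i / x t i) (Finset.mem_univ i)
    rw [le_div_iff₀ (hxpos t i)] at this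
    simpa [hrdef] using this
  have hxR : ∀ t i, x (t+1) i ≤ R t * x t i := by
    intro t i
    have := Finset.le_sup' (fun i => x (t+1) i / x t i) (Finset.mem_univ i)
    rw [div_le_iff₀ (hxpos t i)] at this
    simpa [hRdef] using this
  have hrR : ∀ t, r t ≤ R t := by
    intro t
    have h1 := Finset.inf'_le (fun i => x (t+1) i / x t i) (Finset.mem_univ ⟨0, hn⟩)
    have h2 := Finset.le_sup' (fun i => x (t+1) i / x t i) (Finset.mem_univ ⟨0, hn⟩)
    simp only [hrdef, hRdef]
    exact le_trans h1 h2
  have hrpos : ∀ t, 0 < r t := by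
    intro t
    simp only [hrdef]
    exact (Finset.lt_inf'_iff hne).2 fun i _ => div_pos (hxpos (t+1) i) (hxpos t i)
  have hrmono : Monotone r := by
    refine monotone_nat_of_le_succ fun t => ?_
    refine Finset.le_inf' hne _ fun i _ => ?_
    rw [le_div_iff₀ (hxpos (t+1) i)]
    calc r t * x (t+1) i = ∑ j, Q i j * (r t * x t j) := by
          rw [hxapp]; rw [Finset.mul_sum]; congr 1; ext j; ring
      _ ≤ ∑ j, Q i j * x (t+1) j :=
          Finset.sum_le_sum fun j _ => mul_le_mul_of_nonneg_left (hrx t j) (hQ i j).le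
      _ = x (t+2) i := (hxapp (t+1) i).symm
  have hRanti : Antitone R := by
    refine antitone_nat_of_succ_le fun t => ?_
    refine Finset.sup'_le hne _ fun i _ => ?_
    rw [div_le_iff₀ (hxpos (t+1) i)]
    calc x (t+2) i = ∑ j, Q i j * x (t+1) j := hxapp (t+1) i
      _ ≤ ∑ j, Q i j * (R t * x t j) :=
          Finset.sum_le_sum fun j _ => mul_le_mul_of_nonneg_left (hxR t j) (hQ i j).le
      _ = R t * x (t+1) i := by rw [hxapp]; rw [Finset.mul_sum]; congr 1; ext j; ring
  set m : ℝ := Finset.univ.inf' hne (fun i => Finset.univ.inf' hne (fun j => Q i j)) with hmdef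
  set M : ℝ := Finset.univ.sup' hne (fun i => Finset.univ.sup' hne (fun j => Q i j)) with hMdef
  have hm : ∀ i j, m ≤ Q i j := by
    intro i j
    have h1 := Finset.inf'_le (fun i => Finset.univ.inf' hne (fun j => Q i j)) (Finset.mem_univ i)
    have h2 := Finset.inf'_le (fun j => Q i j) (Finset.mem_univ j)
    simp only [hmdef]; exact le_trans h1 h2
  have hM : ∀ i j, Q i j ≤ M := by
    intro i j
    have h1 := Finset.le_sup' (fun i => Finset.univ.sup' hne (fun j => Q i j)) (Finset.mem_univ i)
    have h2 := Finset.le_sup' (fun j => Q i j) (Finset.mem_univ j)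
    simp only [hMdef]; exact le_trans h2 h1
  have hmpos : 0 < m := by
    simp only [hmdef]
    exact (Finset.lt_inf'_iff hne).2 fun i _ => (Finset.lt_inf'_iff hne).2 fun j _ => hQ i j
  have hMpos : 0 < M := lt_of_lt_of_le hmpos (le_trans (hm ⟨0,hn⟩ ⟨0,hn⟩) (hM ⟨0,hn⟩ ⟨0,hn⟩))
  set θ : ℝ := 1 - m / M with hθdef
  have hθ0 : 0 ≤ θ := by
    have : m / M ≤ 1 := (div_le_one hMpos).2 (le_trans (hm ⟨0,hn⟩ ⟨0,hn⟩) (hM ⟨0,hn⟩ ⟨0,hn⟩))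
    simp only [hθdef]; linarith
  have hθ1 : θ < 1 := by
    have : 0 < m / M := div_pos hmpos hMpos
    simp only [hθdef]; linarith
  -- contraction
  have hcontr : ∀ t, R (t+1) - r (t+1) ≤ θ * (R t - r t) := by
    intro t
    set S : ℝ := ∑ j, x t j with hSdef
    have hS : 0 < S := Finset.sum_pos (fun j _ => hxpos t j) hne
    have hMS : 0 < M * S := mul_pos hMpos hS
    set D : ℝ := ∑ j, (x (t+1) j - r t * x t j) with hDdef
    set D' : ℝ := ∑ j, (R t * x t j - x (t+1) j) with hD'def
    have hD0 : 0 ≤ D := Finset.sum_nonneg fun j _ => by linarith [hrx t j]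
    have hD'0 : 0 ≤ D' := Finset.sum_nonneg fun j _ => by linarith [hxR t j]
    have hxMS : ∀ i, x (t+1) i ≤ M * S := by
      intro i
      rw [hxapp, hSdef, Finset.mul_sum]
      exact Finset.sum_le_sum fun j _ => mul_le_mul_of_nonneg_right (hM i j) (hxpos t j).le
    have step1 : ∀ i, m * D ≤ x (t+2) i - r t * x (t+1) i := by
      intro i
      have he : ∑ j, Q i j * (x (t+1) j - r t * x t j) = x (t+2) i - r t * x (t+1) i := by
        rw [hxapp (t+1) i, hxapp t i, Finset.mul_sum, ← Finset.sum_sub_distrib]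
        exact Finset.sum_congr rfl fun j _ => by ring
      rw [← he, hDdef, Finset.mul_sum]
      exact Finset.sum_le_sum fun j _ =>
        mul_le_mul_of_nonneg_right (hm i j) (by linarith [hrx t j])
    have step1' : ∀ i, m * D' ≤ R t * x (t+1) i - x (t+2) i := by
      intro i
      have he : ∑ j, Q i j * (R t * x t j - x (t+1) j) = R t * x (t+1) i - x (t+2) i := by
        rw [hxapp (t+1) i, hxapp t i, Finset.mul_sum, ← Finset.sum_sub_distrib]
        exact Finset.sum_congr rfl fun j _ => by ring
      rw [← he, hD'def, Finset.mul_sum]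
      exact Finset.sum_le_sum fun j _ =>
        mul_le_mul_of_nonneg_right (hm i j) (by linarith [hxR t j])
    have hrstep : r t + m * D / (M * S) ≤ r (t+1) := by
      refine Finset.le_inf' hne _ fun i _ => ?_
      rw [le_div_iff₀ (hxpos (t+1) i)]
      have hey : m * D / (M*S) * x (t+1) i ≤ m * D / (M*S) * (M*S) :=
        mul_le_mul_of_nonneg_left (hxMS i) (div_nonneg (mul_nonneg hmpos.le hD0) hMS.le)
      have hcanc : m * D / (M*S) * (M*S) = m * D := div_mul_cancel₀ _ (ne_of_gt hMS)
      nlinarith [step1 i, hxpos (t+1) i]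
    have hRstep : R (t+1) ≤ R t - m * D' / (M * S) := by
      refine Finset.sup'_le hne _ fun i _ => ?_
      rw [div_le_iff₀ (hxpos (t+1) i)]
      have hey : m * D' / (M*S) * x (t+1) i ≤ m * D' / (M*S) * (M*S) :=
        mul_le_mul_of_nonneg_left (hxMS i) (div_nonneg (mul_nonneg hmpos.le hD'0) hMS.le)
      have hcanc : m * D' / (M*S) * (M*S) = m * D' := div_mul_cancel₀ _ (ne_of_gt hMS)
      nlinarith [step1' i, hxpos (t+1) i]
    have hDD' : D + D' = (R t - r t) * S := by
      rw [hDdef, hD'def, ← Finset.sum_add_distrib, hSdef, Finset.mul_sum]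
      exact Finset.sum_congr rfl fun j _ => by ring
    have hkey : m * D / (M*S) + m * D' / (M*S) = (m/M) * (R t - r t) := by
      rw [← add_div]
      rw [show m * D + m * D' = m * ((R t - r t) * S) by rw [← hDD']; ring]
      field_simp
    simp only [hθdef]
    nlinarith [hrstep, hRstep, hkey]
  have hgeo : ∀ t, R t - r t ≤ (R 0 - r 0) * θ ^ t := by
    intro t; induction t with
    | zero => simp
    | succ t ih =>
      calc R (t+1) - r (t+1) ≤ θ * (R t - r t) := hcontr t
        _ ≤ θ * ((R 0 - r 0) * θ ^ t) := mul_le_mul_of_nonneg_left ih hθ0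
        _ = (R 0 - r 0) * θ ^ (t+1) := by ring
  have hbddr : BddAbove (Set.range r) := by
    refine ⟨R 0, ?_⟩; rintro _ ⟨t, rfl⟩
    exact le_trans (hrR t) (hRanti (Nat.zero_le t))
  set lam : ℝ := ⨆ t, r t with hlamdef
  have hrlam : Tendsto r atTop (𝓝 lam) := tendsto_atTop_ciSup hrmono hbddr
  have hlampos : 0 < lam := lt_of_lt_of_le (hrpos 0) (le_ciSup hbddr 0)
  have hrlelam : ∀ t, r t ≤ lam := fun t => le_ciSup hbddr t
  have hdiff0 : Tendsto (fun t => R t - r t) atTop (𝓝 0) := by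
    refine squeeze_zero (fun t => by linarith [hrR t]) hgeo ?_
    have := (tendsto_pow_atTop_nhds_zero_of_lt_one hθ0 hθ1).const_mul (R 0 - r 0)
    simpa using this
  have hRlam : Tendsto R atTop (𝓝 lam) := by
    have := hrlam.add hdiff0
    simp only [add_zero] at this
    refine this.congr fun t => by ring
  have hlamleR : ∀ t, lam ≤ R t := by
    intro t
    refine le_of_tendsto hrlam (Filter.eventually_atTop.2 ⟨t, fun s hs => ?_⟩)
    exact le_trans (hrR s) (hRanti hs)
  -- the sequence a
  set a : ℕ → ℝ := fun t => q₀ ⬝ᵥ x t with hadef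
  have haapp : ∀ t, a t = ∑ i, q₀ i * x t i := fun t => rfl
  have hapos : ∀ t, 0 < a t := fun t => by
    rw [haapp]; exact Finset.sum_pos (fun i _ => mul_pos (hq₀ i) (hxpos t i)) hne
  have hra : ∀ t, r t * a t ≤ a (t+1) := by
    intro t
    calc r t * a t = ∑ i, q₀ i * (r t * x t i) := by
          rw [haapp, Finset.mul_sum]; exact Finset.sum_congr rfl fun i _ => by ring
      _ ≤ ∑ i, q₀ i * x (t+1) i :=
          Finset.sum_le_sum fun i _ => mul_le_mul_of_nonneg_left (hrx t i) (hq₀ i).le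
      _ = a (t+1) := (haapp (t+1)).symm
  have haR : ∀ t, a (t+1) ≤ R t * a t := by
    intro t
    calc a (t+1) = ∑ i, q₀ i * x (t+1) i := haapp (t+1)
      _ ≤ ∑ i, q₀ i * (R t * x t i) :=
          Finset.sum_le_sum fun i _ => mul_le_mul_of_nonneg_left (hxR t i) (hq₀ i).le
      _ = R t * a t := by
          rw [haapp, Finset.mul_sum]; exact Finset.sum_congr rfl fun i _ => by ring
  have hratio : Tendsto (fun t => a (t+1) / a t) atTop (𝓝 lam) := by
    refine tendsto_of_tendsto_of_tendsto_of_le_of_le hrlam hRlam (fun t => ?_) (fun t => ?_)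
    · rw [le_div_iff₀ (hapos t)]; exact hra t
    · rw [div_le_iff₀ (hapos t)]; exact haR t
  -- normalized vectors y t
  set y : ℕ → Fin n → ℝ := fun t i => x t i / a t with hydef
  have hypos : ∀ t i, 0 < y t i := fun t i => div_pos (hxpos t i) (hapos t)
  set q' : ℝ := Finset.univ.sup' hne q₀ with hq'def
  set qlo : ℝ := Finset.univ.inf' hne q₀ with hqlodef
  have hq'ge : ∀ i, q₀ i ≤ q' := fun i => Finset.le_sup' q₀ (Finset.mem_univ i)
  have hqlole : ∀ i, qlo ≤ q₀ i := fun i => Finset.inf'_le q₀ (Finset.mem_univ i)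
  have hqlopos : 0 < qlo := by
    simp only [hqlodef]; exact (Finset.lt_inf'_iff hne).2 fun i _ => hq₀ i
  have hq'pos : 0 < q' := lt_of_lt_of_le hqlopos (le_trans (hqlole ⟨0,hn⟩) (hq'ge ⟨0,hn⟩))
  have hxup : ∀ s i, x (s+1) i ≤ M * ∑ j, x s j := by
    intro s i; rw [hxapp, Finset.mul_sum]
    exact Finset.sum_le_sum fun j _ => mul_le_mul_of_nonneg_right (hM i j) (hxpos s j).le
  have hxlow : ∀ s i, m * ∑ j, x s j ≤ x (s+1) i := by
    intro s i; rw [hxapp, Finset.mul_sum]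
    exact Finset.sum_le_sum fun j _ => mul_le_mul_of_nonneg_right (hm i j) (hxpos s j).le
  have haup : ∀ s, a (s+1) ≤ (n:ℝ) * q' * (M * ∑ j, x s j) := by
    intro s
    rw [haapp]
    calc ∑ i, q₀ i * x (s+1) i ≤ ∑ _i : Fin n, q' * (M * ∑ j, x s j) :=
          Finset.sum_le_sum fun i _ => mul_le_mul (hq'ge i) (hxup s i) (hxpos _ i).le hq'pos.le
      _ = (n:ℝ) * q' * (M * ∑ j, x s j) := by
          rw [Finset.sum_const, Finset.card_univ, Fintype.card_fin, nsmul_eq_mul]; ring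
  have halow : ∀ s, qlo * (m * ∑ j, x s j) ≤ a (s+1) := by
    intro s
    rw [haapp]
    calc qlo * (m * ∑ j, x s j) ≤ q₀ ⟨0,hn⟩ * x (s+1) ⟨0,hn⟩ :=
          mul_le_mul (hqlole _) (hxlow s _) (mul_pos hmpos (Finset.sum_pos (fun j _ => hxpos s j) hne)).le (hq₀ _).le
      _ ≤ ∑ i, q₀ i * x (s+1) i :=
          Finset.single_le_sum (fun i _ => (mul_pos (hq₀ i) (hxpos _ i)).le) (Finset.mem_univ _)
  set B : ℝ := M / (qlo * m) with hBdef
  set β : ℝ := m / ((n:ℝ) * q' * M) with hβdef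
  have hnpos : (0:ℝ) < (n:ℝ) := by exact_mod_cast hn
  have hβpos : 0 < β := div_pos hmpos (mul_pos (mul_pos hnpos hq'pos) hMpos)
  have hyB : ∀ s i, y (s+1) i ≤ B := by
    intro s i
    have hS : 0 < ∑ j, x s j := Finset.sum_pos (fun j _ => hxpos s j) hne
    have h1 : y (s+1) i ≤ (M * ∑ j, x s j) / (qlo * (m * ∑ j, x s j)) :=
      div_le_div₀ (mul_pos hMpos hS).le (hxup s i)
        (mul_pos hqlopos (mul_pos hmpos hS)) (halow s)
    refine le_trans h1 (le_of_eq ?_)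
    rw [hBdef]; field_simp
  have hyβ : ∀ s i, β ≤ y (s+1) i := by
    intro s i
    have hS : 0 < ∑ j, x s j := Finset.sum_pos (fun j _ => hxpos s j) hne
    have h1 : (m * ∑ j, x s j) / ((n:ℝ) * q' * (M * ∑ j, x s j)) ≤ y (s+1) i := by
      refine div_le_div₀ (hxpos (s+1) i).le (hxlow s i) (hapos (s+1)) (haup s)
    refine le_trans (le_of_eq ?_) h1
    rw [hβdef]; field_simp
  -- one-step variation bound
  have hstepv : ∀ t i, |y (t+1) i - y t i| ≤ ((R t - r t) / r 0) * y t i := by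
    intro t i
    have hub2 : y (t+1) i ≤ (R t / r t) * y t i := by
      have : (R t / r t) * y t i = (R t * x t i) / (r t * a t) := by
        simp only [hydef]; rw [div_mul_div_comm]
      rw [this]
      exact div_le_div₀ (mul_nonneg (le_trans (hrpos t).le (hrR t)) (hxpos t i).le) (hxR t i)
        (mul_pos (hrpos t) (hapos t)) (hra t)
    have hlb2 : (r t / R t) * y t i ≤ y (t+1) i := by
      have hRpos : 0 < R t := lt_of_lt_of_le (hrpos t) (hrR t)
      have : (r t / R t) * y t i = (r t * x t i) / (R t * a t) := by
        simp only [hydef]; rw [div_mul_div_comm]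
      rw [this]
      exact div_le_div₀ (hxpos (t+1) i).le (hrx t i) (hapos (t+1)) (haR t)
    have hr0t : r 0 ≤ r t := hrmono (Nat.zero_le t)
    have hRpos : 0 < R t := lt_of_lt_of_le (hrpos t) (hrR t)
    rw [abs_le]
    constructor
    · have h1 : (r t / R t) * y t i - y t i = -(((R t - r t)/R t) * y t i) := by
        field_simp
        ring
      have h2 : ((R t - r t)/R t) * y t i ≤ ((R t - r t)/r 0) * y t i := by
        refine mul_le_mul_of_nonneg_right ?_ (hypos t i).le
        exact div_le_div_of_nonneg_left (by linarith [hrR t]) (hrpos 0) (le_trans hr0t (hrR t))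
      nlinarith [hlb2]
    · have h1 : (R t / r t) * y t i - y t i = ((R t - r t)/r t) * y t i := by
        field_simp [(hrpos t).ne', hRpos.ne', (hapos t).ne']
      have h2 : ((R t - r t)/r t) * y t i ≤ ((R t - r t)/r 0) * y t i := by
        refine mul_le_mul_of_nonneg_right ?_ (hypos t i).le
        exact div_le_div_of_nonneg_left (by linarith [hrR t]) (hrpos 0) hr0t
      nlinarith [hub2]
  -- geometric Cauchy bound, limit vector
  set C : ℝ := (R 0 - r 0) * B / r 0 with hCdef
  have hR0r0 : 0 ≤ R 0 - r 0 := by linarith [hrR 0]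
  have hBpos : 0 < B := div_pos hMpos (mul_pos hqlopos hmpos)
  have hlimy : ∀ i, ∃ L, Tendsto (fun t => y t i) atTop (𝓝 L) := by
    intro i
    have hC : CauchySeq (fun t => y (t+1) i) := by
      apply cauchySeq_of_le_geometric θ C hθ1
      intro t
      rw [Real.dist_eq, abs_sub_comm]
      have h1 := hstepv (t+1) i
      refine le_trans h1 ?_
      have e1 : R (t+1) - r (t+1) ≤ (R 0 - r 0) * θ ^ t := by
        refine le_trans (hgeo (t+1)) ?_
        exact mul_le_mul_of_nonneg_left (pow_le_pow_of_le_one hθ0 hθ1.le (Nat.le_succ t)) hR0r0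
      have e2 : y (t+1) i ≤ B := hyB t i
      have e3 : 0 ≤ (R (t+1) - r (t+1)) / r 0 :=
        div_nonneg (by linarith [hrR (t+1)]) (hrpos 0).le
      calc ((R (t+1) - r (t+1)) / r 0) * y (t+1) i ≤ ((R (t+1) - r (t+1)) / r 0) * B :=
            mul_le_mul_of_nonneg_left e2 e3
        _ ≤ (((R 0 - r 0) * θ ^ t) / r 0) * B := by
            exact mul_le_mul_of_nonneg_right ((div_le_div_iff_of_pos_right (hrpos 0)).2 e1) hBpos.le
        _ = C * θ ^ t := by rw [hCdef]; field_simp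
    obtain ⟨L, hL⟩ := cauchySeq_tendsto_of_complete hC
    exact ⟨L, (tendsto_add_atTop_iff_nat 1).1 hL⟩
  choose yl hyl using hlimy
  have hylpos : ∀ i, 0 < yl i := by
    intro i
    refine lt_of_lt_of_le hβpos (ge_of_tendsto (hyl i) ?_)
    refine Filter.eventually_atTop.2 ⟨1, fun t ht => ?_⟩
    cases t with
    | zero => exact absurd ht (by norm_num)
    | succ s => exact hyβ s i
  have hQyl : ∀ i, (∑ j, Q i j * yl j) = lam * yl i := by
    intro i
    have h1 : Tendsto (fun t => ∑ j, Q i j * y t j) atTop (𝓝 (∑ j, Q i j * yl j)) :=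
      tendsto_finset_sum _ fun j _ => (hyl j).const_mul _
    have h2 : ∀ t : ℕ, ∑ j, Q i j * y t j = (a (t+1) / a t) * y (t+1) i := by
      intro t
      have e1 : ∑ j, Q i j * y t j = x (t+1) i / a t := by
        rw [hxapp, Finset.sum_div]
        exact Finset.sum_congr rfl fun j _ => by simp only [hydef]; rw [mul_div_assoc]
      rw [e1]
      simp only [hydef]
      rw [div_mul_div_comm]
      rw [mul_comm (a (t+1)) (x (t+1) i), mul_div_mul_right _ _ (hapos (t+1)).ne']
    have h3 : Tendsto (fun t => (a (t+1) / a t) * y (t+1) i) atTop (𝓝 (lam * yl i)) :=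
      hratio.mul ((tendsto_add_atTop_iff_nat 1).2 (hyl i))
    exact tendsto_nhds_unique (h1.congr h2) h3
  -- lam belongs to the complex spectrum
  have hspecmem : (lam : ℂ) ∈ spectrum ℂ (Q.map Complex.ofReal) := by
    rw [spectrum.mem_iff]
    intro hunit
    rw [Matrix.isUnit_iff_isUnit_det] at hunit
    have hdet : ((algebraMap ℂ (Matrix (Fin n) (Fin n) ℂ)) (lam:ℂ) - Q.map Complex.ofReal).det = 0 := by
      rw [← Matrix.exists_mulVec_eq_zero_iff]
      refine ⟨fun i => (yl i : ℂ), ?_, ?_⟩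
      · intro h0
        have h1 := congrFun h0 ⟨0, hn⟩
        simp only [Pi.zero_apply, Complex.ofReal_eq_zero] at h1
        exact (hylpos ⟨0, hn⟩).ne' h1
      · funext i
        simp only [Matrix.mulVec, dotProduct, Matrix.sub_apply, Matrix.map_apply,
          Matrix.algebraMap_matrix_apply, Algebra.algebraMap_self, RingHom.id_apply, Pi.zero_apply]
        rw [Finset.sum_congr rfl (fun j _ => sub_mul (if i = j then (lam:ℂ) else 0) ((Q i j : ℂ)) ((yl j : ℂ))), Finset.sum_sub_distrib]
        have e1 : ∑ j, (if i = j then (lam:ℂ) else 0) * (yl j:ℂ) = (lam:ℂ) * (yl i:ℂ) := by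
          rw [Finset.sum_congr rfl (fun j _ => by rw [ite_mul, zero_mul]), Finset.sum_ite_eq]
          simp
        have e2 : ∑ j, (Q i j : ℂ) * (yl j : ℂ) = (lam : ℂ) * (yl i : ℂ) := by
          have h := congrArg (fun z : ℝ => (z : ℂ)) (hQyl i)
          push_cast at h
          exact h
        rw [e1, e2, sub_self]
    rw [hdet] at hunit
    simp at hunit
  -- every complex eigenvalue has modulus at most lam
  have hub : ∀ μ : ℂ, μ ∈ spectrum ℂ (Q.map Complex.ofReal) → ‖μ‖ ≤ lam := by
    intro μ hμ
    rw [spectrum.mem_iff, Matrix.isUnit_iff_isUnit_det] at hμ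
    have hdet : ((algebraMap ℂ (Matrix (Fin n) (Fin n) ℂ)) μ - Q.map Complex.ofReal).det = 0 := by
      by_contra h
      exact hμ (isUnit_iff_ne_zero.2 h)
    obtain ⟨v, hv0, hv⟩ := Matrix.exists_mulVec_eq_zero_iff.2 hdet
    have heig : ∀ i, ∑ j, (Q i j : ℂ) * v j = μ * v i := by
      intro i
      have h1 := congrFun hv i
      simp only [Matrix.mulVec, dotProduct, Matrix.sub_apply, Matrix.map_apply,
        Matrix.algebraMap_matrix_apply, Algebra.algebraMap_self, RingHom.id_apply, Pi.zero_apply] at h1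
      rw [Finset.sum_congr rfl (fun j _ => sub_mul (if i = j then μ else 0) ((Q i j : ℂ)) (v j)),
        Finset.sum_sub_distrib] at h1
      rw [Finset.sum_congr rfl (fun j _ => by rw [ite_mul, zero_mul]), Finset.sum_ite_eq] at h1
      simp only [Finset.mem_univ, if_true] at h1
      exact (sub_eq_zero.1 h1).symm
    -- pass to absolute values
    set w : Fin n → ℝ := fun i => ‖v i‖ with hwdef
    have hw0 : ∀ i, 0 ≤ w i := fun i => norm_nonneg _
    obtain ⟨i₁, hvi₁⟩ := Function.ne_iff.1 hv0
    have hwi₁ : 0 < w i₁ := norm_pos_iff.2 (by simpa using hvi₁)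
    have hQw : ∀ i, ‖μ‖ * w i ≤ ∑ j, Q i j * w j := by
      intro i
      calc ‖μ‖ * w i = ‖μ * v i‖ := (norm_mul μ (v i)).symm
        _ = ‖∑ j, (Q i j : ℂ) * v j‖ := by rw [heig]
        _ ≤ ∑ j, ‖(Q i j : ℂ) * v j‖ := norm_sum_le _ _
        _ = ∑ j, Q i j * w j := Finset.sum_congr rfl fun j _ => by
            rw [norm_mul, Complex.norm_real, Real.norm_eq_abs, abs_of_pos (hQ i j)]
    have hiter : ∀ (t : ℕ) i, (‖μ‖)^t * w i ≤ ((Q^t) *ᵥ w) i := by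
      intro t
      induction t with
      | zero => intro i; simp [Matrix.one_mulVec]
      | succ t ih =>
        intro i
        have hQtw : ((Q^(t+1)) *ᵥ w) i = ∑ j, Q i j * ((Q^t) *ᵥ w) j := by
          rw [pow_succ', ← Matrix.mulVec_mulVec, Matrix.mulVec, dotProduct]
        rw [hQtw]
        have s1 : (‖μ‖)^(t+1) * w i = (‖μ‖)^t * (‖μ‖ * w i) := by ring
        have s2 : (‖μ‖)^t * (‖μ‖ * w i) ≤ (‖μ‖)^t * ∑ j, Q i j * w j :=
          mul_le_mul_of_nonneg_left (hQw i) (pow_nonneg (norm_nonneg _) t)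
        have s3 : (‖μ‖)^t * ∑ j, Q i j * w j = ∑ j, Q i j * ((‖μ‖)^t * w j) := by
          rw [Finset.mul_sum]; exact Finset.sum_congr rfl fun j _ => by ring
        have s4 : ∑ j, Q i j * ((‖μ‖)^t * w j) ≤ ∑ j, Q i j * (((Q^t) *ᵥ w) j) :=
          Finset.sum_le_sum fun j _ => mul_le_mul_of_nonneg_left (ih j) (hQ i j).le
        linarith
    set c : ℝ := Finset.univ.sup' hne (fun k => w k / g k) with hcdef
    have hwcg : ∀ j, w j ≤ c * g j := by
      intro j
      have h := Finset.le_sup' (fun k => w k / g k) (Finset.mem_univ j)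
      exact (div_le_iff₀ (hg j)).1 h
    have hcpos : 0 < c :=
      lt_of_lt_of_le (div_pos hwi₁ (hg i₁)) (Finset.le_sup' (fun k => w k / g k) (Finset.mem_univ i₁))
    have hmonoQ : ∀ (t : ℕ) i, ((Q^t) *ᵥ w) i ≤ c * x t i := by
      intro t
      induction t with
      | zero =>
        intro i
        simpa [hxdef, Matrix.one_mulVec] using hwcg i
      | succ t ih =>
        intro i
        have hQtw : ((Q^(t+1)) *ᵥ w) i = ∑ j, Q i j * ((Q^t) *ᵥ w) j := by
          rw [pow_succ', ← Matrix.mulVec_mulVec, Matrix.mulVec, dotProduct]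
        rw [hQtw]
        calc ∑ j, Q i j * ((Q^t) *ᵥ w) j ≤ ∑ j, Q i j * (c * x t j) :=
              Finset.sum_le_sum fun j _ => mul_le_mul_of_nonneg_left (ih j) (hQ i j).le
          _ = c * x (t+1) i := by
              rw [hxapp, Finset.mul_sum]; exact Finset.sum_congr rfl fun j _ => by ring
    have hxa : ∀ t, x t i₁ ≤ a t / q₀ i₁ := by
      intro t
      rw [le_div_iff₀ (hq₀ i₁)]
      have h := Finset.single_le_sum (f := fun i => q₀ i * x t i)
        (fun i _ => (mul_pos (hq₀ i) (hxpos t i)).le) (Finset.mem_univ i₁)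
      rw [mul_comm, haapp]
      exact h
    set K : ℝ := c / (q₀ i₁ * w i₁) with hKdef
    have hKpos : 0 < K := div_pos hcpos (mul_pos (hq₀ i₁) hwi₁)
    have hKa : ∀ t, (‖μ‖)^t ≤ K * a t := by
      intro t
      have h1 : (‖μ‖)^t * w i₁ ≤ c * (a t / q₀ i₁) :=
        le_trans (le_trans (hiter t i₁) (hmonoQ t i₁)) (mul_le_mul_of_nonneg_left (hxa t) hcpos.le)
      have h2 : (‖μ‖)^t ≤ (c * (a t / q₀ i₁)) / w i₁ := (le_div_iff₀ hwi₁).2 h1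
      refine le_trans h2 (le_of_eq ?_)
      rw [hKdef]
      field_simp
    by_contra hlt
    push_neg at hlt
    have hbpos : 0 < ‖μ‖ := lt_trans hlampos hlt
    set b : ℝ := ‖μ‖ with hbdef
    set η : ℝ := (lam + b)/2 with hηdef
    have hηlam : lam < η := by simp only [hηdef]; linarith
    have hηb : η < b := by simp only [hηdef]; linarith
    have hηpos : 0 < η := lt_trans hlampos hηlam
    obtain ⟨s, hs⟩ := ((tendsto_order.1 hRlam).2 η hηlam).exists
    have hstepa : ∀ k, a (s+k) ≤ a s * η^k := by
      intro k
      induction k with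
      | zero => simp
      | succ k ih =>
        have h1 : a (s+k+1) ≤ R (s+k) * a (s+k) := haR (s+k)
        have h2 : R (s+k) ≤ R s := hRanti (Nat.le_add_right s k)
        have h3 : R (s+k) * a (s+k) ≤ η * a (s+k) :=
          mul_le_mul_of_nonneg_right (le_trans h2 hs.le) (hapos (s+k)).le
        have h4 : η * a (s+k) ≤ η * (a s * η^k) := mul_le_mul_of_nonneg_left ih hηpos.le
        calc a (s+(k+1)) = a (s+k+1) := rfl
          _ ≤ η * (a s * η^k) := by linarith
          _ = a s * η^(k+1) := by ring
    have hcontra : ∀ k, (b/η)^k ≤ (K * a s) / b^s := by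
      intro k
      have h1 : b^(s+k) ≤ K * (a s * η^k) :=
        le_trans (hKa (s+k)) (mul_le_mul_of_nonneg_left (hstepa k) hKpos.le)
      rw [div_pow, div_le_div_iff₀ (pow_pos hηpos k) (pow_pos hbpos s)]
      calc b^k * b^s = b^(s+k) := by rw [← pow_add]; ring_nf
        _ ≤ K * (a s * η^k) := h1
        _ = K * a s * η^k := by ring
    obtain ⟨k, hk⟩ :=
      ((tendsto_pow_atTop_atTop_of_one_lt ((one_lt_div hηpos).2 hηb)).eventually_gt_atTop
        ((K * a s)/b^s)).exists
    exact absurd (hcontra k) (not_le.2 hk)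
  have hsr : specRad n Q = lam := by
    unfold specRad
    refine IsGreatest.csSup_eq ⟨⟨(lam:ℂ), hspecmem, ?_⟩, ?_⟩
    · rw [Complex.norm_real, Real.norm_eq_abs]
      exact (abs_of_pos hlampos).symm
    · rintro ρ ⟨μ, hμ, rfl⟩
      exact hub μ hμ
  constructor
  · rw [hsr]; exact hlampos
  · rw [hsr]
    refine hratio.congr fun t => ?_
    simp only [hadef, hxdef]
include hn hQ hg hq₀ in
lemma apos_aux (t : ℕ) : 0 < q₀ ⬝ᵥ ((Q ^ t) *ᵥ g) := by
  have hne : (Finset.univ : Finset (Fin n)).Nonempty := ⟨⟨0, hn⟩, Finset.mem_univ _⟩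
  have hxpos : ∀ (t : ℕ) i, 0 < ((Q ^ t) *ᵥ g) i := by
    intro t
    induction t with
    | zero => intro i; simpa using hg i
    | succ t ih =>
      intro i
      have h : ((Q^(t+1)) *ᵥ g) i = ∑ j, Q i j * ((Q^t) *ᵥ g) j := by
        rw [pow_succ', ← Matrix.mulVec_mulVec, Matrix.mulVec, dotProduct]
      rw [h]
      exact Finset.sum_pos (fun j _ => mul_pos (hQ i j) (ih j)) hne
  exact Finset.sum_pos (fun i _ => mul_pos (hq₀ i) (hxpos t i)) hne

end

/-- Theorem 3, part 2: for a strictly positive matrix `Q`, strictly positive `q₀` and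
`g`, the ratio `(q₀ᵀQ^{t+δ}g)/(q₀ᵀQᵗg)` converges to `ρ(Q)^δ`, so the alternative
average convergence rate `R‡(t)` converges to `1 - ρ(Q)`. -/
theorem alternative_rate_tendsto_specRad (n : ℕ) (hn : 1 ≤ n)
    (Q : Matrix (Fin n) (Fin n) ℝ) (hQ : ∀ i j, 0 < Q i j)
    (q₀ : Fin n → ℝ) (hq₀ : ∀ i, 0 < q₀ i)
    (g : Fin n → ℝ) (hg : ∀ i, 0 < g i)
    (δ : ℕ) (hδ : 1 ≤ δ) :
    Filter.Tendsto
      (fun t : ℕ => (q₀ ⬝ᵥ ((Q ^ (t + δ)) *ᵥ g)) / (q₀ ⬝ᵥ ((Q ^ t) *ᵥ g)))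
      Filter.atTop (nhds (specRad n Q ^ δ)) ∧
    Filter.Tendsto
      (fun t : ℕ =>
        1 - ((q₀ ⬝ᵥ ((Q ^ (t + δ)) *ᵥ g)) / (q₀ ⬝ᵥ ((Q ^ t) *ᵥ g))) ^ ((1 : ℝ) / δ))
      Filter.atTop (nhds (1 - specRad n Q)) := by
  obtain ⟨hpos, hconv⟩ := perron_core hn Q hQ g hg q₀ hq₀
  have ha : ∀ t, 0 < q₀ ⬝ᵥ ((Q ^ t) *ᵥ g) := apos_aux hn Q hQ g hg q₀ hq₀
  set a : ℕ → ℝ := fun t => q₀ ⬝ᵥ ((Q ^ t) *ᵥ g) with hadef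
  have hprod : ∀ (d t : ℕ), a (t + d) / a t = ∏ k ∈ Finset.range d, a (t + k + 1) / a (t + k) := by
    intro d
    induction d with
    | zero => intro t; simp [div_self (ha t).ne']; exact (ha t).ne'
    | succ d ih =>
      intro t
      rw [Finset.prod_range_succ, ← ih t]
      rw [div_mul_div_comm, mul_comm (a t) (a (t+d)), mul_div_mul_left _ _ (ha (t+d)).ne']
      rw [show t + (d+1) = t + d + 1 from rfl]
  have key : Tendsto (fun t : ℕ => a (t + δ) / a t) atTop (𝓝 (specRad n Q ^ δ)) := by
    have h2 : Tendsto (fun t => ∏ k ∈ Finset.range δ, a (t + k + 1) / a (t + k)) atTop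
        (𝓝 (∏ _k ∈ Finset.range δ, specRad n Q)) := by
      refine tendsto_finset_prod _ fun k _ => ?_
      have h := hconv.comp (tendsto_add_atTop_nat k)
      exact h.congr fun t => by simp [Function.comp]; rfl
    rw [Finset.prod_const, Finset.card_range] at h2
    exact h2.congr fun t => (hprod δ t).symm
  refine ⟨key, ?_⟩
  have hδ0 : (δ:ℝ) ≠ 0 := Nat.cast_ne_zero.2 (by omega)
  have hpowpos : 0 < specRad n Q ^ δ := pow_pos hpos δ
  have h3 : Tendsto (fun t => (a (t+δ)/a t) ^ ((1:ℝ)/δ)) atTop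
      (𝓝 ((specRad n Q ^ δ) ^ ((1:ℝ)/δ))) :=
    key.rpow tendsto_const_nhds (Or.inl hpowpos.ne')
  have h4 : (specRad n Q ^ δ : ℝ) ^ ((1:ℝ)/δ) = specRad n Q := by
    rw [← Real.rpow_natCast (specRad n Q) δ, ← Real.rpow_mul hpos.le]
    rw [mul_one_div, div_self hδ0, Real.rpow_one]
  rw [h4] at h3
  exact h3.const_sub 1
end
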